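/- Let T be a finite tree rooted at a vertex r, let S be a dominating set of T, let A ⊆ a_1(S) be a set all of whose vertices have the same depth in T, let N be the set of vertices of N_1(S) having a neighbour in A, and let S' = (S \ A) ∪ N. Then (i) |S'| ≥ |S|, and (ii) every vertex of A and every descendant of a vertex of A is dominated by S' (i.e., lies in S' or is adjacent to a vertex of S'). -/

import Mathlib

open scoped Classical

variable {V : Type*} [Fintype V] [DecidableEq V]

/-- `S` is a dominating set of `G`: every vertex is in `S` or adjacent to a vertex of `S`. -/
def IsDomSet (G : SimpleGraph V) (S : Finset V) : Prop :=
  ∀ v : V, v ∈ S ∨ ∃ u ∈ S, G.Adj u v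

/-- `S` is a minimal dominating set: it is dominating and no proper subset is dominating. -/
def MinimalDomSet (G : SimpleGraph V) (S : Finset V) : Prop :=
  IsDomSet G S ∧ ∀ T : Finset V, T ⊂ S → ¬ IsDomSet G T

/-- `d_i(G)`: the number of dominating sets of `G` of cardinality `i`. -/
noncomputable def domCount (G : SimpleGraph V) (i : ℕ) : ℕ :=
  (Finset.univ.filter fun S : Finset V => IsDomSet G S ∧ S.card = i).card

/-- `a(S)`: the set of critical vertices of a dominating set `S`. -/
noncomputable def aSet (G : SimpleGraph V) (S : Finset V) : Finset V :=
  S.filter fun v => ¬ IsDomSet G (S.erase v)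

/-- `a(G,i)`: the sum of `|a(S)|` over all dominating sets `S` of cardinality `i`. -/
noncomputable def aTotal (G : SimpleGraph V) (i : ℕ) : ℕ :=
  ∑ S ∈ Finset.univ.filter (fun S : Finset V => IsDomSet G S ∧ S.card = i), (aSet G S).card

/-- `γ(G)`: the minimum cardinality of a dominating set. -/
noncomputable def gamma (G : SimpleGraph V) : ℕ :=
  sInf {k | ∃ S : Finset V, IsDomSet G S ∧ S.card = k}

/-- `Γ(G)`: the maximum cardinality of a minimal dominating set. -/
noncomputable def bigGamma (G : SimpleGraph V) : ℕ :=
  sSup {k | ∃ S : Finset V, MinimalDomSet G S ∧ S.card = k}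

/-- The closed neighbourhood `N[v]` as a finset. -/
noncomputable def closedNbhd (G : SimpleGraph V) (v : V) : Finset V :=
  Finset.univ.filter fun u => u = v ∨ G.Adj v u

/-- `N_1(S)`: vertices outside `S` with exactly one closed neighbour in `S`. -/
noncomputable def N1Set (G : SimpleGraph V) (S : Finset V) : Finset V :=
  Finset.univ.filter fun v => v ∉ S ∧ (closedNbhd G v ∩ S).card = 1

/-- `N_2(S)`: vertices outside `S` with at least two closed neighbours in `S`. -/
noncomputable def N2Set (G : SimpleGraph V) (S : Finset V) : Finset V :=
  Finset.univ.filter fun v => v ∉ S ∧ 2 ≤ (closedNbhd G v ∩ S).card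

/-- `a_1(S)`: critical vertices whose closed neighbourhood meets `N_1(S)`. -/
noncomputable def a1Set (G : SimpleGraph V) (S : Finset V) : Finset V :=
  (aSet G S).filter fun v => (closedNbhd G v ∩ N1Set G S).Nonempty

/-- `a_2(S)`: critical vertices whose closed neighbourhood misses `N_1(S)`. -/
noncomputable def a2Set (G : SimpleGraph V) (S : Finset V) : Finset V :=
  (aSet G S).filter fun v => closedNbhd G v ∩ N1Set G S = ∅

/-- In the tree `G` rooted at `r`, `x` is a descendant of `y`:
`y` lies on the unique path from `x` to the root `r`. -/
def Descendant (G : SimpleGraph V) (r x y : V) : Prop :=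
  G.dist x r = G.dist x y + G.dist y r

/-- `x` is a child of `y` in `G` rooted at `r`. -/
def IsChild (G : SimpleGraph V) (r x y : V) : Prop :=
  Descendant G r x y ∧ G.dist y x = 1

/-- `p` is the parent of `x` in `G` rooted at `r`. -/
def IsParent (G : SimpleGraph V) (r p x : V) : Prop :=
  IsChild G r x p

/-- `x` is a grandchild of `y` in `G` rooted at `r`. -/
def IsGrandchild (G : SimpleGraph V) (r x y : V) : Prop :=
  Descendant G r x y ∧ G.dist y x = 2

omit [Fintype V] [DecidableEq V] in
lemma unique_parent (G : SimpleGraph V) (hT : G.IsTree) {r x y u : V}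
    (hyx : G.Adj y x) (hux : G.Adj u x)
    (hdx : G.dist r x = G.dist r y + 1) (hdu : G.dist r u = G.dist r y) : u = y := by
  obtain ⟨w, hw⟩ := hT.isConnected.exists_walk_length_eq_dist r y
  obtain ⟨w', hw'⟩ := hT.isConnected.exists_walk_length_eq_dist r u
  have hp1 : (w.concat hyx).IsPath :=
    SimpleGraph.Walk.isPath_of_length_eq_dist _ (by
      rw [SimpleGraph.Walk.length_concat, hw, hdx])
  have hp2 : (w'.concat hux).IsPath :=
    SimpleGraph.Walk.isPath_of_length_eq_dist _ (by
      rw [SimpleGraph.Walk.length_concat, hw', hdu, hdx])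
  have hpq := hT.IsAcyclic.path_unique ⟨w.concat hyx, hp1⟩ ⟨w'.concat hux, hp2⟩
  have heq : w.concat hyx = w'.concat hux := congrArg Subtype.val hpq
  have hsup : (w.concat hyx).reverse.support = (w'.concat hux).reverse.support := by
    rw [heq]
  rw [SimpleGraph.Walk.reverse_concat, SimpleGraph.Walk.reverse_concat,
    SimpleGraph.Walk.support_cons, SimpleGraph.Walk.support_cons,
    w.reverse.support_eq_cons, w'.reverse.support_eq_cons] at hsup
  simp only [List.cons.injEq] at hsup
  exact hsup.2.1.symm

theorem move_a1_to_n1_part_i_ii (G : SimpleGraph V) (hT : G.IsTree) (r : V)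
    (S : Finset V) (hS : IsDomSet G S)
    (A : Finset V) (hA : A ⊆ a1Set G S)
    (hdepth : ∀ x ∈ A, ∀ y ∈ A, G.dist r x = G.dist r y)
    (N S' : Finset V)
    (hN : N = (N1Set G S).filter fun v => ∃ u ∈ A, G.Adj u v)
    (hS' : S' = (S \ A) ∪ N) :
    S.card ≤ S'.card ∧
      ∀ x : V, (x ∈ A ∨ ∃ y ∈ A, Descendant G r x y) →
        (x ∈ S' ∨ ∃ u ∈ S', G.Adj u x) := by
  
  have hc := hT.isConnected
  -- basic membership facts
  have hAS : A ⊆ S := fun a ha => by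
    have := hA ha
    simp only [a1Set, aSet, Finset.mem_filter] at this
    exact this.1.1
  have hNS : ∀ v ∈ N, v ∉ S := fun v hv => by
    rw [hN, Finset.mem_filter, N1Set, Finset.mem_filter] at hv
    exact hv.1.2.1
  -- the key uniqueness claim
  have key : ∀ y ∈ A, ∀ x : V, Descendant G r x y → x ≠ y →
      ∀ u ∈ A, G.Adj u x → u = y ∧ G.Adj y x := by
    intro y hy x hdesc hne u hu hux
    have hdu : G.dist r u = G.dist r y := hdepth u hu y hy
    have hxy1 : 1 ≤ G.dist x y := hc.pos_dist_of_ne hne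
    have htri : G.dist r x ≤ G.dist r u + G.dist u x := hc.dist_triangle
    have hux1 : G.dist u x = 1 := SimpleGraph.dist_eq_one_iff_adj.mpr hux
    have hdescx : G.dist r x = G.dist x y + G.dist r y := by
      rw [SimpleGraph.dist_comm]
      rw [Descendant] at hdesc
      rw [hdesc, SimpleGraph.dist_comm (u := y)]
    have hxy : G.dist x y = 1 := by omega
    have hadjxy : G.Adj x y := SimpleGraph.dist_eq_one_iff_adj.mp hxy
    have hdx : G.dist r x = G.dist r y + 1 := by omega
    exact ⟨unique_parent G hT hadjxy.symm hux hdx hdu, hadjxy.symm⟩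
  constructor
  · -- part (i): cardinality
    set f : V → V := fun a =>
      if h : (closedNbhd G a ∩ N1Set G S).Nonempty then h.choose else a with hf
    have hfa : ∀ a ∈ A, f a ∈ N ∧ G.Adj a (f a) := by
      intro a ha
      have h1 := hA ha
      simp only [a1Set, Finset.mem_filter] at h1
      have hne := h1.2
      have hfv : f a = hne.choose := by simp [hf, hne]
      have hmem := hne.choose_spec
      rw [Finset.mem_inter] at hmem
      have hcn := hmem.1
      simp only [closedNbhd, Finset.mem_filter] at hcn
      have hn1 := hmem.2
      have hnotS : hne.choose ∉ S := by
        simp only [N1Set, Finset.mem_filter] at hn1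
        exact hn1.2.1
      have haS : a ∈ S := hAS ha
      have hadj : G.Adj a hne.choose := by
        rcases hcn.2 with h | h
        · exact absurd (show hne.choose ∈ S by have h' : hne.choose = a := h; rw [h']; exact haS) hnotS
        · exact h
      refine ⟨?_, hfv ▸ hadj⟩
      rw [hfv, hN, Finset.mem_filter]
      exact ⟨hn1, a, ha, hadj⟩
    have hcard : A.card ≤ N.card := by
      apply Finset.card_le_card_of_injOn f (fun a ha => (hfa a ha).1)
      intro a ha a' ha' hfe
      have h1 := (hfa a ha)
      have h2 := (hfa a' ha')
      have hn1 : f a ∈ N1Set G S := by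
        have := h1.1; rw [hN, Finset.mem_filter] at this; exact this.1
      simp only [N1Set, Finset.mem_filter] at hn1
      have hone := hn1.2.2
      obtain ⟨b, hb⟩ := Finset.card_eq_one.mp hone
      have hma : a ∈ closedNbhd G (f a) ∩ S := by
        simp only [Finset.mem_inter, closedNbhd, Finset.mem_filter]
        exact ⟨⟨Finset.mem_univ _, Or.inr h1.2.symm⟩, hAS ha⟩
      have hma' : a' ∈ closedNbhd G (f a) ∩ S := by
        simp only [Finset.mem_inter, closedNbhd, Finset.mem_filter]
        exact ⟨⟨Finset.mem_univ _, Or.inr (hfe ▸ h2.2.symm)⟩, hAS ha'⟩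
      rw [hb, Finset.mem_singleton] at hma hma'
      rw [hma, hma']
    have hdisj : Disjoint (S \ A) N := by
      rw [Finset.disjoint_right]
      intro v hv hv'
      exact hNS v hv (Finset.mem_sdiff.mp hv').1
    have hAcard : A.card ≤ S.card := Finset.card_le_card hAS
    rw [hS', Finset.card_union_of_disjoint hdisj, Finset.card_sdiff_of_subset hAS]
    omega
  · -- part (ii): domination
    intro x hx
    by_cases hxA : x ∈ A
    · -- x ∈ A : dominated by its N1-witness, which lies in N
      have h1 := hA hxA
      simp only [a1Set, Finset.mem_filter] at h1
      obtain ⟨v, hv⟩ := h1.2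
      rw [Finset.mem_inter] at hv
      have hcn := hv.1
      simp only [closedNbhd, Finset.mem_filter] at hcn
      have hn1 := hv.2
      have hvS : v ∉ S := by
        simp only [N1Set, Finset.mem_filter] at hn1; exact hn1.2.1
      have hadj : G.Adj x v := by
        rcases hcn.2 with h | h
        · exact absurd (show v ∈ S by rw [h]; exact hAS hxA) hvS
        · exact h
      refine Or.inr ⟨v, ?_, hadj.symm⟩
      rw [hS', Finset.mem_union]
      right
      rw [hN, Finset.mem_filter]
      exact ⟨hn1, x, hxA, hadj⟩
    · rcases hx with hx | ⟨y, hyA, hdesc⟩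
      · exact absurd hx hxA
      by_cases hxS : x ∈ S
      · refine Or.inl ?_
        rw [hS', Finset.mem_union]
        exact Or.inl (Finset.mem_sdiff.mpr ⟨hxS, hxA⟩)
      have hne : x ≠ y := fun h => hxA (h ▸ hyA)
      by_cases hex : ∃ w ∈ S, G.Adj w x ∧ w ∉ A
      · obtain ⟨w, hwS, hwx, hwA⟩ := hex
        refine Or.inr ⟨w, ?_, hwx⟩
        rw [hS', Finset.mem_union]
        exact Or.inl (Finset.mem_sdiff.mpr ⟨hwS, hwA⟩)
      · -- all S-neighbours of x lie in A, hence equal y; so x ∈ N1 adjacent to A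
        push_neg at hex
        obtain ⟨u, huS, hux⟩ := (hS x).resolve_left hxS
        have huA : u ∈ A := hex u huS hux
        have hk := key y hyA x hdesc hne u huA hux
        have hadjyx : G.Adj y x := hk.2
        left
        rw [hS', Finset.mem_union]
        right
        rw [hN, Finset.mem_filter]
        refine ⟨?_, y, hyA, hadjyx⟩
        simp only [N1Set, Finset.mem_filter]
        refine ⟨Finset.mem_univ _, hxS, ?_⟩
        have hsingle : closedNbhd G x ∩ S = {y} := by
          ext w
          rw [Finset.mem_inter, closedNbhd, Finset.mem_filter, Finset.mem_singleton]
          constructor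
          · rintro ⟨⟨-, h | h⟩, hwS⟩
            · exact absurd (h ▸ hwS) hxS
            · exact (key y hyA x hdesc hne w (hex w hwS h.symm) h.symm).1
          · rintro rfl
            exact ⟨⟨Finset.mem_univ _, Or.inr hadjyx.symm⟩, hAS hyA⟩
        rw [hsingle, Finset.card_singleton]
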